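/- arXiv:1811.04216 — 4 statements merged into one kernel-verified Lean document; each statement's English description precedes it below -/
import Mathlib

section
/- Let N ≥ 1 and h ≥ 1 be integers and p ∈ (0, 1] a real number. Let Θ₁, …, Θ_N be independent, identically distributed random variables, each geometric with parameter p, i.e., taking values in the positive integers with P(Θᵢ = x) = (1−p)^{x−1}·p for every integer x ≥ 1. For a subset S ⊆ {1, …, N}, define the expected idle time E[I_S] = E[max(h − Σ_{i∈S} Θᵢ, 0)]. Then (h − E[I_{{1}}])/1 ≥ (h − E[I_{{1,2}}])/2 ≥ ⋯ ≥ (h − E[I_{{1,…,N}}])/N; that is, the map k ↦ (h − E[I_{{1,…,k}}])/k is nonincreasing for k ∈ {1, …, N}. -/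
open MeasureTheory ProbabilityTheory

lemma aux_pointwise {α : Type*} [DecidableEq α] (T : Finset α) (hT : T.Nonempty)
    (x : α → ℝ) (hx : ∀ i, 0 ≤ x i) (h : ℝ) (hh : 0 ≤ h) :
    ((T.card : ℝ) - 1) * min (∑ i ∈ T, x i) h ≤ ∑ j ∈ T, min (∑ i ∈ T.erase j, x i) h := by
  set S := ∑ i ∈ T, x i with hS
  have hxS : ∀ j ∈ T, x j ≤ S := fun j hj => Finset.single_le_sum (fun i _ => hx i) hj
  have hSnn : 0 ≤ S := Finset.sum_nonneg fun i _ => hx i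
  have herase : ∀ j ∈ T, ∑ i ∈ T.erase j, x i = S - x j := by
    intro j hj
    rw [hS, Finset.sum_erase_eq_sub hj]
  have hcard : 1 ≤ T.card := Finset.Nonempty.card_pos hT
  rcases le_total S h with hc | hc
  · have : ∀ j ∈ T, min (∑ i ∈ T.erase j, x i) h = S - x j := by
      intro j hj
      rw [herase j hj, min_eq_left (by linarith [hx j])]
    rw [Finset.sum_congr rfl this, min_eq_left hc, Finset.sum_sub_distrib,
      Finset.sum_const, ← hS]
    push_cast
    ring_nf
    nlinarith [hSnn]
  · -- S ≥ h
    have hdnn : ∀ j : α, 0 ≤ max (h - S + x j) 0 := fun j => le_max_right _ _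
    have hmin : ∀ j ∈ T, min (∑ i ∈ T.erase j, x i) h = h - max (h - S + x j) 0 := by
      intro j hj
      rw [herase j hj]
      rcases le_total (S - x j) h with h1 | h1
      · rw [min_eq_left h1, max_eq_left (by linarith)]; ring
      · rw [min_eq_right h1, max_eq_right (by linarith)]; ring
    have hsum_d : ∑ j ∈ T, max (h - S + x j) 0 ≤ h := by
      classical
      set U := T.filter (fun j => 0 < h - S + x j) with hU
      have hUsub : U ⊆ T := Finset.filter_subset _ _
      have h1 : ∑ j ∈ T, max (h - S + x j) 0 = ∑ j ∈ U, max (h - S + x j) 0 := by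
        refine (Finset.sum_subset hUsub ?_).symm
        intro j hj hjU
        have : ¬ (0 < h - S + x j) := by
          simpa [hU, hj] using hjU
        simp [max_eq_right (le_of_not_gt this)]
      have h2 : ∑ j ∈ U, max (h - S + x j) 0 = ∑ j ∈ U, (h - S + x j) := by
        refine Finset.sum_congr rfl fun j hj => ?_
        have : 0 < h - S + x j := (Finset.mem_filter.mp hj).2
        simp [max_eq_left this.le]
      rcases U.eq_empty_or_nonempty with hUe | hUne
      · rw [h1, hUe]; simpa using hh
      · have hUcard : 1 ≤ U.card := Finset.Nonempty.card_pos hUne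
        have h3 : ∑ j ∈ U, (h - S + x j) = U.card * (h - S) + ∑ j ∈ U, x j := by
          rw [Finset.sum_add_distrib, Finset.sum_const, nsmul_eq_mul]
        have h4 : ∑ j ∈ U, x j ≤ S :=
          Finset.sum_le_sum_of_subset_of_nonneg hUsub (fun i _ _ => hx i)
        have h5 : (U.card : ℝ) * (h - S) ≤ 1 * (h - S) := by
          apply mul_le_mul_of_nonpos_right _ (by linarith)
          exact_mod_cast hUcard
        rw [h1, h2, h3]; linarith
    rw [Finset.sum_congr rfl hmin, min_eq_right hc, Finset.sum_sub_distrib,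
      Finset.sum_const, nsmul_eq_mul]
    have : (1:ℝ) ≤ T.card := by exact_mod_cast hcard
    nlinarith [hsum_d]

lemma aux_key {Ω : Type*} [MeasurableSpace Ω] (μ : Measure Ω) (N : ℕ)
    (Θ : Fin N → Ω → ℕ) (hmeas : ∀ i, Measurable (Θ i))
    (hindep : iIndepFun Θ μ)
    (q : ℕ → ENNReal) (hq : ∀ i n, μ (Θ i ⁻¹' {n}) = q n)
    (m : ℕ) (σ : Fin m → Fin N) (hσ : Function.Injective σ) (s : ℕ) :
    μ {ω | ∑ j, Θ (σ j) ω = s}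
      = ∑ x ∈ Finset.Nat.antidiagonalTuple m s, ∏ j, q (x j) := by
  classical
  have hset : {ω | ∑ j, Θ (σ j) ω = s}
      = ⋃ x ∈ Finset.Nat.antidiagonalTuple m s, ⋂ j, Θ (σ j) ⁻¹' {x j} := by
    ext ω
    simp only [Set.mem_setOf_eq, Set.mem_iUnion, Set.mem_iInter, Set.mem_preimage,
      Set.mem_singleton_iff, Finset.Nat.mem_antidiagonalTuple]
    constructor
    · intro hs
      exact ⟨fun j => Θ (σ j) ω, hs, fun j => rfl⟩
    · rintro ⟨x, hx, hall⟩
      rw [← hx]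
      exact Finset.sum_congr rfl fun j _ => hall j
  have hdisj : (↑(Finset.Nat.antidiagonalTuple m s) : Set (Fin m → ℕ)).PairwiseDisjoint
      (fun x => ⋂ j, Θ (σ j) ⁻¹' {x j}) := by
    intro x _ y _ hxy
    apply Set.disjoint_left.mpr
    intro ω hx hy
    apply hxy
    funext j
    simp only [Set.mem_iInter, Set.mem_preimage, Set.mem_singleton_iff] at hx hy
    rw [← hx j, ← hy j]
  rw [hset, measure_biUnion_finset hdisj
    (fun x _ => MeasurableSet.iInter fun j => (hmeas (σ j)) (measurableSet_singleton _))]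
  refine Finset.sum_congr rfl fun x _ => ?_
  -- single-tuple probability factorizes
  set sets : Fin N → Set ℕ := fun i => {n | ∀ j, σ j = i → n = x j} with hsets
  have h1 : ∀ j, sets (σ j) = {x j} := by
    intro j
    ext n
    simp only [hsets, Set.mem_setOf_eq, Set.mem_singleton_iff]
    constructor
    · intro H; exact H j rfl
    · intro hn j' hj'
      rw [hn, hσ hj']
  have h2 : (⋂ i ∈ Finset.image σ Finset.univ, Θ i ⁻¹' sets i)
      = ⋂ j, Θ (σ j) ⁻¹' {x j} := by
    ext ω
    simp only [Set.mem_iInter, Set.mem_preimage, Finset.mem_image, Finset.mem_univ,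
      true_and]
    constructor
    · intro H j
      have := H (σ j) ⟨j, rfl⟩
      rwa [h1 j] at this
    · rintro H i ⟨j, rfl⟩
      rw [h1 j]; exact H j
  have h3 := hindep.measure_inter_preimage_eq_mul (Finset.image σ Finset.univ)
    (sets := sets) (fun i _ => MeasurableSet.of_discrete)
  rw [h2] at h3
  rw [h3, Finset.prod_image (fun a _ b _ hab => hσ hab)]
  refine Finset.prod_congr rfl fun j _ => ?_
  rw [h1 j, hq]

lemma aux_int_eq {Ω : Type*} [MeasurableSpace Ω] (μ : Measure Ω) (N : ℕ)
    (Θ : Fin N → Ω → ℕ) (hmeas : ∀ i, Measurable (Θ i))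
    (hindep : iIndepFun Θ μ)
    (q : ℕ → ENNReal) (hq : ∀ i n, μ (Θ i ⁻¹' {n}) = q n)
    (m : ℕ) (σ τ : Fin m → Fin N) (hσ : Function.Injective σ)
    (hτ : Function.Injective τ) (g : ℕ → ℝ) :
    ∫ ω, g (∑ j, Θ (σ j) ω) ∂μ = ∫ ω, g (∑ j, Θ (τ j) ω) ∂μ := by
  have hX : Measurable (fun ω => ∑ j, Θ (σ j) ω) :=
    Finset.measurable_sum _ (fun j _ => hmeas (σ j))
  have hY : Measurable (fun ω => ∑ j, Θ (τ j) ω) :=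
    Finset.measurable_sum _ (fun j _ => hmeas (τ j))
  have hmap : Measure.map (fun ω => ∑ j, Θ (σ j) ω) μ
      = Measure.map (fun ω => ∑ j, Θ (τ j) ω) μ := by
    apply MeasureTheory.Measure.ext_of_singleton
    intro s
    rw [Measure.map_apply hX (measurableSet_singleton s),
      Measure.map_apply hY (measurableSet_singleton s)]
    have h1 : (fun ω => ∑ j, Θ (σ j) ω) ⁻¹' {s} = {ω | ∑ j, Θ (σ j) ω = s} := rfl
    have h2 : (fun ω => ∑ j, Θ (τ j) ω) ⁻¹' {s} = {ω | ∑ j, Θ (τ j) ω = s} := rfl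
    rw [h1, h2, aux_key μ N Θ hmeas hindep q hq m σ hσ s,
      aux_key μ N Θ hmeas hindep q hq m τ hτ s]
  have hg : Measurable g := Measurable.of_discrete
  rw [← integral_map hX.aemeasurable hg.aestronglyMeasurable,
    ← integral_map hY.aemeasurable hg.aestronglyMeasurable, hmap]

/-- Theorem 3, symmetric-structure case. Let `Θ 1, …, Θ N` be i.i.d. geometric
random variables with parameter `p ∈ (0, 1]` (values in the positive integers, with
`P(Θ i = x) = (1−p)^{x−1} p` for `x ≥ 1`). For `S ⊆ {1,…,N}` let
`E[I_S] = E[max (h − Σ_{i∈S} Θ i) 0]`. Then the map `k ↦ (h − E[I_{{1,…,k}}]) / k` is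
nonincreasing for `k ∈ {1, …, N}`. -/
theorem stmt4 {Ω : Type*} [MeasurableSpace Ω] (μ : Measure Ω) [IsProbabilityMeasure μ]
    (N h : ℕ) (hN : 1 ≤ N) (hh : 1 ≤ h) (p : ℝ) (hp : p ∈ Set.Ioc (0 : ℝ) 1)
    (Θ : Fin N → Ω → ℕ) (hmeas : ∀ i, Measurable (Θ i))
    (hindep : iIndepFun Θ μ)
    (hpos : ∀ i, ∀ᵐ ω ∂μ, 1 ≤ Θ i ω)
    (hgeom : ∀ i, ∀ x : ℕ, 1 ≤ x →
      μ {ω | Θ i ω = x} = ENNReal.ofReal ((1 - p) ^ (x - 1) * p))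
    (k : ℕ) (hk1 : 1 ≤ k) (hkN : k + 1 ≤ N) :
    ((h : ℝ) - ∫ ω, max ((h : ℝ) -
        ∑ i ∈ Finset.univ.filter (fun i : Fin N => (i : ℕ) < k + 1), (Θ i ω : ℝ)) 0 ∂μ)
        / (k + 1 : ℝ)
      ≤ ((h : ℝ) - ∫ ω, max ((h : ℝ) -
        ∑ i ∈ Finset.univ.filter (fun i : Fin N => (i : ℕ) < k), (Θ i ω : ℝ)) 0 ∂μ)
        / (k : ℝ) := by
  classical
  -- common pmf
  set q : ℕ → ENNReal := fun n => if n = 0 then 0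
    else ENNReal.ofReal ((1 - p) ^ (n - 1) * p) with hqdef
  have hq : ∀ i n, μ (Θ i ⁻¹' {n}) = q n := by
    intro i n
    have hpre : Θ i ⁻¹' {n} = {ω | Θ i ω = n} := rfl
    rcases Nat.eq_zero_or_pos n with rfl | hn
    · simp only [hqdef, if_pos rfl, hpre]
      refine measure_mono_null ?_ (ae_iff.mp (hpos i))
      intro ω hω
      simp only [Set.mem_setOf_eq] at hω ⊢
      omega
    · rw [hpre, hgeom i n hn, hqdef]
      simp only [if_neg (by omega : n ≠ 0)]
  -- index injections
  have hkN' : k ≤ N := by omega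
  set σ1 : Fin (k+1) → Fin N := Fin.castLE hkN with hσ1
  set σ0 : Fin k → Fin N := Fin.castLE hkN' with hσ0
  have hinj1 : Function.Injective σ1 := Fin.castLE_injective _
  have hinj0 : Function.Injective σ0 := Fin.castLE_injective _
  set T : Finset (Fin N) := Finset.univ.filter (fun i : Fin N => (i : ℕ) < k + 1) with hT
  set A : Finset (Fin N) := Finset.univ.filter (fun i : Fin N => (i : ℕ) < k) with hA
  have hTimg : T = Finset.image σ1 Finset.univ := by
    ext i
    simp only [hT, Finset.mem_filter, Finset.mem_univ, true_and, Finset.mem_image]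
    constructor
    · intro hi; exact ⟨⟨(i : ℕ), hi⟩, Fin.ext rfl⟩
    · rintro ⟨j, rfl⟩; simpa [hσ1] using j.isLt
  have hAimg : A = Finset.image σ0 Finset.univ := by
    ext i
    simp only [hA, Finset.mem_filter, Finset.mem_univ, true_and, Finset.mem_image]
    constructor
    · intro hi; exact ⟨⟨(i : ℕ), hi⟩, Fin.ext rfl⟩
    · rintro ⟨j, rfl⟩; simpa [hσ0] using j.isLt
  have hcardT : T.card = k + 1 := by
    rw [hTimg, Finset.card_image_of_injective _ hinj1, Finset.card_univ, Fintype.card_fin]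
  have hcardA : A.card = k := by
    rw [hAimg, Finset.card_image_of_injective _ hinj0, Finset.card_univ, Fintype.card_fin]
  -- integrability and measurability
  have hmeasR : ∀ i, Measurable (fun ω => (Θ i ω : ℝ)) :=
    fun i => measurable_from_top.comp (hmeas i)
  have hmB : ∀ B : Finset (Fin N),
      Measurable (fun ω => min (∑ i ∈ B, (Θ i ω : ℝ)) (h : ℝ)) := by
    intro B
    exact (Finset.measurable_sum _ fun i _ => hmeasR i).min measurable_const
  have hintB : ∀ B : Finset (Fin N),
      Integrable (fun ω => min (∑ i ∈ B, (Θ i ω : ℝ)) (h : ℝ)) μ := by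
    intro B
    refine Integrable.mono' (integrable_const (h : ℝ)) (hmB B).aestronglyMeasurable ?_
    refine Filter.Eventually.of_forall fun ω => ?_
    have h0 : (0:ℝ) ≤ min (∑ i ∈ B, (Θ i ω : ℝ)) (h : ℝ) :=
      le_min (Finset.sum_nonneg fun i _ => by positivity) (by positivity)
    rw [Real.norm_eq_abs, abs_of_nonneg h0]
    exact min_le_right _ _
  -- rewrite max as h - min
  have hrw : ∀ B : Finset (Fin N),
      ∫ ω, max ((h : ℝ) - ∑ i ∈ B, (Θ i ω : ℝ)) 0 ∂μ
        = (h : ℝ) - ∫ ω, min (∑ i ∈ B, (Θ i ω : ℝ)) (h : ℝ) ∂μ := by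
    intro B
    have hpt : ∀ ω, max ((h : ℝ) - ∑ i ∈ B, (Θ i ω : ℝ)) 0
        = (h : ℝ) - min (∑ i ∈ B, (Θ i ω : ℝ)) (h : ℝ) := by
      intro ω
      rcases le_total (∑ i ∈ B, (Θ i ω : ℝ)) (h : ℝ) with hc | hc
      · rw [min_eq_left hc, max_eq_left (by linarith)]
      · rw [min_eq_right hc, max_eq_right (by linarith)]; ring
    rw [integral_congr_ae (Filter.Eventually.of_forall hpt),
      integral_sub (integrable_const _) (hintB B), integral_const]
    simp
  -- exchangeability
  have hsum_img : ∀ (m : ℕ) (σ : Fin m → Fin N) (hσ : Function.Injective σ) (ω : Ω),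
      ∑ i ∈ Finset.image σ Finset.univ, (Θ i ω : ℝ) = ((∑ j, Θ (σ j) ω : ℕ) : ℝ) := by
    intro m σ hσ ω
    rw [Finset.sum_image (fun a _ b _ hab => hσ hab), Nat.cast_sum]
  have hIeq : ∀ (B : Finset (Fin N)), B.card = k →
      ∫ ω, min (∑ i ∈ B, (Θ i ω : ℝ)) (h : ℝ) ∂μ
        = ∫ ω, min (∑ i ∈ A, (Θ i ω : ℝ)) (h : ℝ) ∂μ := by
    intro B hB
    set σB : Fin k → Fin N := fun l => ((B.orderIsoOfFin hB l) : Fin N) with hσB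
    have hinjB : Function.Injective σB := fun a b hab =>
      (B.orderIsoOfFin hB).injective (Subtype.coe_injective hab)
    have hBimg : B = Finset.image σB Finset.univ := by
      ext i
      simp only [Finset.mem_image, Finset.mem_univ, true_and]
      constructor
      · intro hi
        refine ⟨(B.orderIsoOfFin hB).symm ⟨i, hi⟩, ?_⟩
        show ((B.orderIsoOfFin hB) ((B.orderIsoOfFin hB).symm ⟨i, hi⟩) : Fin N) = i
        rw [(B.orderIsoOfFin hB).apply_symm_apply]
      · rintro ⟨l, rfl⟩; exact (B.orderIsoOfFin hB l).2
    set g : ℕ → ℝ := fun n => min (n : ℝ) (h : ℝ) with hg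
    have e1 : ∫ ω, min (∑ i ∈ B, (Θ i ω : ℝ)) (h : ℝ) ∂μ
        = ∫ ω, g (∑ j, Θ (σB j) ω) ∂μ := by
      refine integral_congr_ae (Filter.Eventually.of_forall fun ω => ?_)
      rw [hg]
      simp only
      rw [hBimg, hsum_img k σB hinjB ω]
    have e2 : ∫ ω, min (∑ i ∈ A, (Θ i ω : ℝ)) (h : ℝ) ∂μ
        = ∫ ω, g (∑ j, Θ (σ0 j) ω) ∂μ := by
      refine integral_congr_ae (Filter.Eventually.of_forall fun ω => ?_)
      rw [hg]
      simp only
      rw [hAimg, hsum_img k σ0 hinj0 ω]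
    rw [e1, e2]
    exact aux_int_eq μ N Θ hmeas hindep q hq k σB σ0 hinjB hinj0 g
  -- pointwise inequality
  have hptw : ∀ ω, (k : ℝ) * min (∑ i ∈ T, (Θ i ω : ℝ)) (h : ℝ)
      ≤ ∑ j ∈ T, min (∑ i ∈ T.erase j, (Θ i ω : ℝ)) (h : ℝ) := by
    intro ω
    have hTne : T.Nonempty := Finset.card_pos.mp (by omega)
    have := aux_pointwise T hTne (fun i => (Θ i ω : ℝ)) (fun i => by positivity)
      (h : ℝ) (by positivity)
    have hc : ((T.card : ℝ) - 1) = (k : ℝ) := by rw [hcardT]; push_cast; ring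
    rwa [hc] at this
  -- integral inequality
  have hmain : (k : ℝ) * ∫ ω, min (∑ i ∈ T, (Θ i ω : ℝ)) (h : ℝ) ∂μ
      ≤ ((k : ℝ) + 1) * ∫ ω, min (∑ i ∈ A, (Θ i ω : ℝ)) (h : ℝ) ∂μ := by
    calc (k : ℝ) * ∫ ω, min (∑ i ∈ T, (Θ i ω : ℝ)) (h : ℝ) ∂μ
        = ∫ ω, (k : ℝ) * min (∑ i ∈ T, (Θ i ω : ℝ)) (h : ℝ) ∂μ := by
          rw [integral_const_mul]
      _ ≤ ∫ ω, ∑ j ∈ T, min (∑ i ∈ T.erase j, (Θ i ω : ℝ)) (h : ℝ) ∂μ := by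
          refine integral_mono ((hintB T).const_mul _)
            (integrable_finset_sum T fun j _ => hintB _) hptw
      _ = ∑ j ∈ T, ∫ ω, min (∑ i ∈ T.erase j, (Θ i ω : ℝ)) (h : ℝ) ∂μ :=
          integral_finset_sum T fun j _ => hintB _
      _ = ∑ j ∈ T, ∫ ω, min (∑ i ∈ A, (Θ i ω : ℝ)) (h : ℝ) ∂μ := by
          refine Finset.sum_congr rfl fun j hj => ?_
          refine hIeq _ ?_
          rw [Finset.card_erase_of_mem hj, hcardT]
          omega
      _ = ((k : ℝ) + 1) * ∫ ω, min (∑ i ∈ A, (Θ i ω : ℝ)) (h : ℝ) ∂μ := by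
          rw [Finset.sum_const, hcardT, nsmul_eq_mul]; push_cast; ring
  rw [hrw T, hrw A]
  have hk0 : (0 : ℝ) < (k : ℝ) := by exact_mod_cast hk1
  rw [div_le_div_iff₀ (by linarith) hk0]
  have e3 : (h : ℝ) - ((h : ℝ) - ∫ ω, min (∑ i ∈ T, (Θ i ω : ℝ)) (h : ℝ) ∂μ)
      = ∫ ω, min (∑ i ∈ T, (Θ i ω : ℝ)) (h : ℝ) ∂μ := by ring
  have e4 : (h : ℝ) - ((h : ℝ) - ∫ ω, min (∑ i ∈ A, (Θ i ω : ℝ)) (h : ℝ) ∂μ)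
      = ∫ ω, min (∑ i ∈ A, (Θ i ω : ℝ)) (h : ℝ) ∂μ := by ring
  rw [e3, e4]
  nlinarith [hmain]
end

section
/- Let h ≥ 1 be an integer and p, p' ∈ (0, 1] real numbers with p ≤ p'. Let Θ be a random variable with P(Θ = x) = (1−p)^{x−1}·p for integers x ≥ 1 and Θ' a random variable with P(Θ' = x) = (1−p')^{x−1}·p' for integers x ≥ 1, and let Y be an integer-valued random variable with 1 ≤ Y ≤ h almost surely, defined on the same probability space, independent of Θ and independent of Θ'. Then p · E[min(Θ + Y, h) − Y] ≤ p' · E[min(Θ' + Y, h) − Y]. -/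
open MeasureTheory ProbabilityTheory

/-- Pointwise indicator decomposition. -/
lemma aux_pointwise_s9 (h t : ℕ) (y : ℤ) (ht : 1 ≤ t) (hy1 : 1 ≤ y) (hyh : y ≤ (h : ℤ)) :
    ((min ((t : ℤ) + y) (h : ℤ) : ℤ) : ℝ) - (y : ℝ) =
      ∑ j ∈ Finset.Ico 1 h, (if j ≤ t ∧ y ≤ (h : ℤ) - (j : ℤ) then (1 : ℝ) else 0) := by
  classical
  set m : ℤ := min (t : ℤ) ((h : ℤ) - y) with hm
  have hm0 : 0 ≤ m := by omega
  have hmh : m ≤ (h : ℤ) - 1 := by omega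
  have hcongr : (∑ j ∈ Finset.Ico 1 h, (if j ≤ t ∧ y ≤ (h : ℤ) - (j : ℤ) then (1 : ℝ) else 0)) =
      ∑ j ∈ Finset.Ico 1 h, (if (j : ℤ) ≤ m then (1 : ℝ) else 0) := by
    refine Finset.sum_congr rfl fun j _ => ?_
    have : (j ≤ t ∧ y ≤ (h : ℤ) - (j : ℤ)) ↔ (j : ℤ) ≤ m := by
      rw [hm, le_min_iff]
      omega
    simp [this]
  rw [hcongr, Finset.sum_boole]
  have hfilter : (Finset.Ico 1 h).filter (fun j : ℕ => (j : ℤ) ≤ m) = Finset.Icc 1 m.toNat := by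
    ext j
    simp only [Finset.mem_filter, Finset.mem_Ico, Finset.mem_Icc]
    omega
  rw [hfilter, Nat.card_Icc]
  have h1 : min ((t : ℤ) + y) (h : ℤ) - y = m := by omega
  have h2 : ((m.toNat + 1 - 1 : ℕ) : ℤ) = m := by omega
  have h3 := congrArg (fun z : ℤ => (z : ℝ)) h1
  push_cast at h3
  have h4 : ((m.toNat + 1 - 1 : ℕ) : ℝ) = ((m : ℤ) : ℝ) := by
    exact_mod_cast congrArg (fun z : ℤ => (z : ℝ)) h2
  rw [h4]
  push_cast
  exact h3

/-- Geometric tail probability. -/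
lemma aux_tail {Ω : Type*} [MeasurableSpace Ω] (μ : Measure Ω) [IsProbabilityMeasure μ]
    (p : ℝ) (hp : p ∈ Set.Ioc (0 : ℝ) 1)
    (Θ : Ω → ℕ) (hΘmeas : Measurable Θ) (hΘpos : ∀ᵐ ω ∂μ, 1 ≤ Θ ω)
    (hgeom : ∀ x : ℕ, 1 ≤ x → μ {ω | Θ ω = x} = ENNReal.ofReal ((1 - p) ^ (x - 1) * p)) :
    ∀ j : ℕ, 1 ≤ j → (μ {ω | j ≤ Θ ω}).toReal = (1 - p) ^ (j - 1) := by
  have hp0 : 0 < p := hp.1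
  have hp1 : 0 ≤ 1 - p := by linarith [hp.2]
  intro j hj
  induction j, hj using Nat.le_induction with
  | base =>
    have hmeas : MeasurableSet {ω | 1 ≤ Θ ω} := hΘmeas measurableSet_Ici
    have h1 : μ {ω | 1 ≤ Θ ω} = 1 := by
      rw [← prob_compl_eq_zero_iff hmeas]
      have h0 : μ {ω | ¬ (1 ≤ Θ ω)} = 0 := ae_iff.mp hΘpos
      simpa [Set.compl_setOf] using h0
    simp [h1]
  | succ n hn ih =>
    have hA : MeasurableSet {ω | Θ ω = n} := hΘmeas (measurableSet_singleton n)
    have hB : MeasurableSet {ω | n + 1 ≤ Θ ω} := hΘmeas measurableSet_Ici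
    have hset : {ω | n ≤ Θ ω} = {ω | Θ ω = n} ∪ {ω | n + 1 ≤ Θ ω} := by
      ext ω; simp only [Set.mem_setOf_eq, Set.mem_union]; omega
    have hdisj : Disjoint {ω | Θ ω = n} {ω | n + 1 ≤ Θ ω} := by
      rw [Set.disjoint_left]; intro ω h1 h2
      simp only [Set.mem_setOf_eq] at h1 h2; omega
    have hsum : μ {ω | n ≤ Θ ω} = μ {ω | Θ ω = n} + μ {ω | n + 1 ≤ Θ ω} := by
      rw [hset, measure_union hdisj hB]
    have htr : (μ {ω | n ≤ Θ ω}).toReal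
        = (μ {ω | Θ ω = n}).toReal + (μ {ω | n + 1 ≤ Θ ω}).toReal := by
      rw [hsum, ENNReal.toReal_add (measure_ne_top μ _) (measure_ne_top μ _)]
    have hgn : (μ {ω | Θ ω = n}).toReal = (1 - p) ^ (n - 1) * p := by
      rw [hgeom n hn, ENNReal.toReal_ofReal (by positivity)]
    have hpow : (1 - p) ^ (n - 1) * (1 - p) = (1 - p) ^ n := by
      rw [← pow_succ, Nat.sub_add_cancel hn]
    have key : (μ {ω | n + 1 ≤ Θ ω}).toReal = (1 - p) ^ (n - 1) - (1 - p) ^ (n - 1) * p := by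
      rw [ih, hgn] at htr; linarith
    have hn1 : (1 - p) ^ (n + 1 - 1) = (1 - p) ^ n := by norm_num
    rw [key, hn1, ← hpow]; ring

/-- Abel-type rewriting of the weighted geometric sum. -/
lemma aux_abel (h : ℕ) (q : ℝ) (hq : q ∈ Set.Ioc (0 : ℝ) 1) (c : ℕ → ℝ) (hch : c h = 0) :
    ∑ j ∈ Finset.Ico 1 h, q * (1 - q) ^ (j - 1) * c j
      = ∑ k ∈ Finset.Ico 1 h, (c k - c (k + 1)) * (1 - (1 - q) ^ k) := by
  have hq0 : q ≠ 0 := ne_of_gt hq.1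
  have htel : ∀ j, j ≤ h → c j = ∑ k ∈ Finset.Ico j h, (c k - c (k + 1)) := by
    intro j hj
    have h1 : ∑ k ∈ Finset.Ico j h, (c (k + 1) - c k) = c h - c j := by
      rw [Finset.sum_Ico_eq_sub _ hj, Finset.sum_range_sub, Finset.sum_range_sub]
      ring
    have h2 : ∑ k ∈ Finset.Ico j h, (c k - c (k + 1))
        = - ∑ k ∈ Finset.Ico j h, (c (k + 1) - c k) := by
      rw [← Finset.sum_neg_distrib]
      exact Finset.sum_congr rfl fun k _ => by ring
    rw [h2, h1, hch]; ring
  calc ∑ j ∈ Finset.Ico 1 h, q * (1 - q) ^ (j - 1) * c j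
      = ∑ j ∈ Finset.Ico 1 h, ∑ k ∈ Finset.Ico j h,
          q * (1 - q) ^ (j - 1) * (c k - c (k + 1)) := by
        refine Finset.sum_congr rfl fun j hj => ?_
        rw [Finset.mem_Ico] at hj
        rw [htel j (le_of_lt hj.2), Finset.mul_sum]
    _ = ∑ k ∈ Finset.Ico 1 h, ∑ j ∈ Finset.Ico 1 (k + 1),
          q * (1 - q) ^ (j - 1) * (c k - c (k + 1)) := by
        refine Finset.sum_comm' fun i j => ?_
        simp only [Finset.mem_Ico]
        omega
    _ = ∑ k ∈ Finset.Ico 1 h, (c k - c (k + 1)) * (1 - (1 - q) ^ k) := by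
        refine Finset.sum_congr rfl fun k _ => ?_
        rw [← Finset.sum_mul]
        have hgeo : ∑ j ∈ Finset.Ico 1 (k + 1), q * (1 - q) ^ (j - 1) = 1 - (1 - q) ^ k := by
          rw [Finset.sum_Ico_eq_sum_range]
          simp only [Nat.add_sub_cancel_left, Nat.add_sub_cancel]
          rw [← Finset.mul_sum, geom_sum_eq (by intro hcon; apply hq0; linarith) k]
          have hne : (1 : ℝ) - q - 1 ≠ 0 := by intro hcon; exact hq0 (by linarith)
          rw [← mul_div_assoc, div_eq_iff hne]
          ring
        rw [hgeo]; ring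

/-- Main decomposition: `p · E[min(Θ+Y,h) − Y] = Σ_{j=1}^{h−1} p(1−p)^{j−1} P(Y ≤ h−j)`. -/
lemma aux_decomp {Ω : Type*} [MeasurableSpace Ω] (μ : Measure Ω) [IsProbabilityMeasure μ]
    (h : ℕ) (p : ℝ) (hp : p ∈ Set.Ioc (0 : ℝ) 1)
    (Θ : Ω → ℕ) (hΘmeas : Measurable Θ) (hΘpos : ∀ᵐ ω ∂μ, 1 ≤ Θ ω)
    (hgeom : ∀ x : ℕ, 1 ≤ x → μ {ω | Θ ω = x} = ENNReal.ofReal ((1 - p) ^ (x - 1) * p))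
    (Y : Ω → ℤ) (hYmeas : Measurable Y)
    (hY : ∀ᵐ ω ∂μ, 1 ≤ Y ω ∧ Y ω ≤ (h : ℤ))
    (hindep : IndepFun Θ Y μ) :
    p * ∫ ω, (((min ((Θ ω : ℤ) + Y ω) (h : ℤ) : ℤ) : ℝ) - (Y ω : ℝ)) ∂μ
      = ∑ j ∈ Finset.Ico 1 h, p * (1 - p) ^ (j - 1)
          * (μ {ω | Y ω ≤ (h : ℤ) - (j : ℤ)}).toReal := by
  classical
  have hAmeas : ∀ j : ℕ, MeasurableSet {ω | j ≤ Θ ω} := fun j => hΘmeas measurableSet_Ici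
  have hBmeas : ∀ j : ℕ, MeasurableSet {ω | Y ω ≤ (h : ℤ) - (j : ℤ)} :=
    fun j => hYmeas measurableSet_Iic
  have hae : (fun ω => (((min ((Θ ω : ℤ) + Y ω) (h : ℤ) : ℤ) : ℝ) - (Y ω : ℝ)))
      =ᵐ[μ] fun ω => ∑ j ∈ Finset.Ico 1 h,
        Set.indicator ({ω | j ≤ Θ ω} ∩ {ω | Y ω ≤ (h : ℤ) - (j : ℤ)}) (fun _ => (1 : ℝ)) ω := by
    filter_upwards [hΘpos, hY] with ω h1 h2
    rw [aux_pointwise_s9 h (Θ ω) (Y ω) h1 h2.1 h2.2]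
    refine Finset.sum_congr rfl fun j _ => ?_
    by_cases hc : j ≤ Θ ω ∧ Y ω ≤ (h : ℤ) - (j : ℤ) <;>
      simp [Set.indicator_apply, Set.mem_inter_iff, Set.mem_setOf_eq, hc]
  have hint : ∫ ω, (((min ((Θ ω : ℤ) + Y ω) (h : ℤ) : ℤ) : ℝ) - (Y ω : ℝ)) ∂μ
      = ∑ j ∈ Finset.Ico 1 h,
          (μ ({ω | j ≤ Θ ω} ∩ {ω | Y ω ≤ (h : ℤ) - (j : ℤ)})).toReal := by
    rw [integral_congr_ae hae, integral_finset_sum _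
      (fun j _ => (integrable_const (1 : ℝ)).indicator ((hAmeas j).inter (hBmeas j)))]
    refine Finset.sum_congr rfl fun j _ => ?_
    rw [integral_indicator_const (1 : ℝ) ((hAmeas j).inter (hBmeas j))]
    simp
    rfl
  have hprod : ∀ j : ℕ, 1 ≤ j →
      (μ ({ω | j ≤ Θ ω} ∩ {ω | Y ω ≤ (h : ℤ) - (j : ℤ)})).toReal
        = (1 - p) ^ (j - 1) * (μ {ω | Y ω ≤ (h : ℤ) - (j : ℤ)}).toReal := by
    intro j hj
    have := hindep.measure_inter_preimage_eq_mul (Set.Ici j) (Set.Iic ((h : ℤ) - (j : ℤ)))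
      measurableSet_Ici measurableSet_Iic
    have hpre : Θ ⁻¹' Set.Ici j = {ω | j ≤ Θ ω} := rfl
    have hpre' : Y ⁻¹' Set.Iic ((h : ℤ) - (j : ℤ)) = {ω | Y ω ≤ (h : ℤ) - (j : ℤ)} := rfl
    rw [hpre, hpre'] at this
    rw [this, ENNReal.toReal_mul, aux_tail μ p hp Θ hΘmeas hΘpos hgeom j hj]
  rw [hint, Finset.mul_sum]
  refine Finset.sum_congr rfl fun j hj => ?_
  rw [Finset.mem_Ico] at hj
  rw [hprod j hj.1]
  ring

/-- Lemma 1: monotonicity of `p ↦ p · E[X_{{1}∪S} − X_S]` in the channel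
quality. Let `Θ` and `Θ'` be geometric random variables with parameters `p ≤ p'` in `(0,1]`,
and `Y` an integer-valued random variable with `1 ≤ Y ≤ h` a.s., independent of `Θ` and of
`Θ'`. Then `p · E[min(Θ + Y, h) − Y] ≤ p' · E[min(Θ' + Y, h) − Y]`. -/
theorem stmt9 {Ω : Type*} [MeasurableSpace Ω] (μ : Measure Ω) [IsProbabilityMeasure μ]
    (h : ℕ) (hh : 1 ≤ h) (p p' : ℝ)
    (hp : p ∈ Set.Ioc (0 : ℝ) 1) (hp' : p' ∈ Set.Ioc (0 : ℝ) 1) (hpp' : p ≤ p')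
    (Θ Θ' : Ω → ℕ) (hΘmeas : Measurable Θ) (hΘ'meas : Measurable Θ')
    (hΘpos : ∀ᵐ ω ∂μ, 1 ≤ Θ ω) (hΘ'pos : ∀ᵐ ω ∂μ, 1 ≤ Θ' ω)
    (hgeom : ∀ x : ℕ, 1 ≤ x → μ {ω | Θ ω = x} = ENNReal.ofReal ((1 - p) ^ (x - 1) * p))
    (hgeom' : ∀ x : ℕ, 1 ≤ x → μ {ω | Θ' ω = x} = ENNReal.ofReal ((1 - p') ^ (x - 1) * p'))
    (Y : Ω → ℤ) (hYmeas : Measurable Y)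
    (hY : ∀ᵐ ω ∂μ, 1 ≤ Y ω ∧ Y ω ≤ (h : ℤ))
    (hindep : IndepFun Θ Y μ) (hindep' : IndepFun Θ' Y μ) :
    p * ∫ ω, (((min ((Θ ω : ℤ) + Y ω) (h : ℤ) : ℤ) : ℝ) - (Y ω : ℝ)) ∂μ
      ≤ p' * ∫ ω, (((min ((Θ' ω : ℤ) + Y ω) (h : ℤ) : ℤ) : ℝ) - (Y ω : ℝ)) ∂μ := by
  set c : ℕ → ℝ := fun j => (μ {ω | Y ω ≤ (h : ℤ) - (j : ℤ)}).toReal with hc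
  have hch : c h = 0 := by
    have h0 : μ {ω | Y ω ≤ (h : ℤ) - (h : ℤ)} = 0 := by
      have hae : μ {ω | ¬ (1 ≤ Y ω ∧ Y ω ≤ (h : ℤ))} = 0 := ae_iff.mp hY
      refine measure_mono_null ?_ hae
      intro ω hω
      simp only [Set.mem_setOf_eq] at hω ⊢
      omega
    simp only [sub_self] at h0
    simp [hc, h0]
  have hcmono : ∀ k : ℕ, c (k + 1) ≤ c k := by
    intro k
    apply ENNReal.toReal_le_toReal (measure_ne_top μ _) (measure_ne_top μ _) |>.mpr
    apply measure_mono
    intro ω hω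
    simp only [Set.mem_setOf_eq] at hω ⊢
    push_cast at hω ⊢
    omega
  rw [aux_decomp μ h p hp Θ hΘmeas hΘpos hgeom Y hYmeas hY hindep,
    aux_decomp μ h p' hp' Θ' hΘ'meas hΘ'pos hgeom' Y hYmeas hY hindep',
    aux_abel h p hp c hch, aux_abel h p' hp' c hch]
  refine Finset.sum_le_sum fun k _ => ?_
  have hd : 0 ≤ c k - c (k + 1) := by linarith [hcmono k]
  have hpow : (1 - p') ^ k ≤ (1 - p) ^ k :=
    pow_le_pow_left₀ (by linarith [hp'.2]) (by linarith) k
  have : 1 - (1 - p) ^ k ≤ 1 - (1 - p') ^ k := by linarith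
  exact mul_le_mul_of_nonneg_left this hd
end

section
/- Let N ≥ 1 and h be integers with h > N, and p ∈ (0, 1] a real number. Let Θ₁, …, Θ_N be independent, identically distributed random variables, each taking values in the positive integers with P(Θᵢ = x) = (1−p)^{x−1}·p for every integer x ≥ 1. Then P(Σ_{i=1}^N Θᵢ ≥ h) = Σ_{i=0}^{N−1} C(h, i)·(1−p)^{h−i}·pⁱ + C(h−1, h−N)·(1−p)^{h−N}·p^N, where C(n, k) denotes the binomial coefficient. -/
open MeasureTheory ProbabilityTheory

namespace Stmt14Aux

open Finset

/-- Geometric pmf, with value `0` at `0`. -/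
noncomputable def g (p : ℝ) (x : ℕ) : ℝ := if x = 0 then 0 else (1 - p) ^ (x - 1) * p

/-- Negative binomial pmf: the distribution of a sum of `m` i.i.d. geometric variables. -/
noncomputable def nb (p : ℝ) (m k : ℕ) : ℝ :=
  if m = 0 then (if k = 0 then 1 else 0)
  else if k < m then 0 else ((k - 1).choose (m - 1) : ℝ) * (1 - p) ^ (k - m) * p ^ m

lemma g_nonneg {p : ℝ} (hp : p ∈ Set.Ioc (0 : ℝ) 1) (x : ℕ) : 0 ≤ g p x := by
  unfold g; split
  · exact le_refl _
  · exact mul_nonneg (pow_nonneg (by linarith [hp.2]) _) hp.1.le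

lemma nb_nonneg {p : ℝ} (hp : p ∈ Set.Ioc (0 : ℝ) 1) (m k : ℕ) : 0 ≤ nb p m k := by
  unfold nb; split
  · split <;> norm_num
  · split
    · exact le_refl _
    · exact mul_nonneg (mul_nonneg (Nat.cast_nonneg _) (pow_nonneg (by linarith [hp.2]) _))
        (pow_nonneg hp.1.le _)

/-- Convolution identity for the negative binomial pmf. -/
lemma conv (p : ℝ) (m k : ℕ) :
    ∑ a ∈ range (k + 1), nb p m a * g p (k - a) = nb p (m + 1) k := by
  rcases Nat.eq_zero_or_pos m with hm | hm
  · subst hm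
    rw [Finset.sum_eq_single 0]
    · simp only [nb, g, if_pos rfl, Nat.sub_zero]
      by_cases hk : k = 0 <;> simp [hk]
    · intro a _ ha; simp [nb, ha]
    · simp
  by_cases hk : k < m + 1
  · rw [nb, if_neg (by omega), if_pos hk]
    apply Finset.sum_eq_zero
    intro a ha
    simp only [mem_range] at ha
    by_cases h1 : a < m
    · simp [nb, if_neg (by omega : ¬ m = 0), if_pos h1]
    · have : k - a = 0 := by omega
      simp [g, this]
  · push_neg at hk
    rw [← Finset.sum_subset (s₁ := Icc m (k - 1)) (h := by
        intro a ha; simp only [mem_Icc] at ha; simp only [mem_range]; omega)]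
    · have hterm : ∀ a ∈ Icc m (k - 1), nb p m a * g p (k - a)
          = ((a - 1).choose (m - 1) : ℝ) * ((1 - p) ^ (k - (m + 1)) * p ^ (m + 1)) := by
        intro a ha
        simp only [mem_Icc] at ha
        rw [nb, if_neg (by omega), if_neg (by omega), g, if_neg (by omega : ¬ (k - a = 0))]
        have h1 : (k - a - 1) + (a - m) = k - (m + 1) := by omega
        rw [← h1, pow_add, pow_succ]
        ring
      rw [Finset.sum_congr rfl hterm, ← Finset.sum_mul]
      have hsum : ∑ a ∈ Icc m (k - 1), ((a - 1).choose (m - 1) : ℝ)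
          = ((k - 1).choose m : ℝ) := by
        rw [← Nat.cast_sum]
        norm_cast
        have : ∑ a ∈ Icc m (k - 1), (a - 1).choose (m - 1)
            = ∑ j ∈ Icc (m - 1) (k - 2), j.choose (m - 1) := by
          apply Finset.sum_nbij' (fun a => a - 1) (fun j => j + 1)
          · intro a ha; simp only [mem_Icc] at *; omega
          · intro j hj; simp only [mem_Icc] at *; omega
          · intro a ha; simp only [mem_Icc] at ha; omega
          · intro j hj; simp only [mem_Icc] at hj; omega
          · intro a ha; rfl
        rw [this, Nat.sum_Icc_choose]
        congr 1 <;> omega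
      rw [hsum, nb, if_neg (by omega), if_neg (by omega)]
      simp only [Nat.add_sub_cancel]
      ring
    · intro a ha hna
      simp only [mem_range] at ha
      simp only [mem_Icc] at hna
      by_cases h1 : a < m
      · simp [nb, if_neg (by omega : ¬ m = 0), if_pos h1]
      · have : k - a = 0 := by omega
        simp [g, this]

/-- Pascal-telescoping identity for partial binomial sums. -/
lemma keyB (p : ℝ) {N h : ℕ} (hN : 1 ≤ N) (hNh : N ≤ h) :
    ∑ i ∈ range N, (h.choose i : ℝ) * p ^ i * (1 - p) ^ (h - i)
      = ∑ i ∈ range N, ((h - 1).choose i : ℝ) * p ^ i * (1 - p) ^ (h - 1 - i)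
        - ((h - 1).choose (N - 1) : ℝ) * p ^ N * (1 - p) ^ (h - N) := by
  obtain ⟨m, rfl⟩ : ∃ m, h = m + 1 := ⟨h - 1, by omega⟩
  simp only [Nat.add_sub_cancel]
  set v : ℕ → ℝ := fun i => if i = 0 then 0
    else ((m.choose (i - 1)) : ℝ) * p ^ i * (1 - p) ^ (m + 1 - i) with hv
  have hterm : ∀ i ∈ range N,
      ((m + 1).choose i : ℝ) * p ^ i * (1 - p) ^ (m + 1 - i)
        - ((m.choose i : ℝ) * p ^ i * (1 - p) ^ (m - i)) = v i - v (i + 1) := by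
    intro i hi
    simp only [mem_range] at hi
    have him : i ≤ m := by omega
    match i, him with
    | 0, _ =>
      have e1 : v 0 = 0 := by simp [hv]
      have e2 : v (0 + 1) = p * (1 - p) ^ m := by simp [hv]
      rw [e1, e2]
      simp only [Nat.choose_zero_right, Nat.cast_one, pow_zero, Nat.sub_zero]
      rw [pow_succ]
      ring
    | (j+1), him =>
      have h1 : m + 1 - (j + 1) = (m - j - 1) + 1 := by omega
      have h2 : m - (j + 1) = m - j - 1 := by omega
      simp only [hv, if_neg (by omega : ¬ (j + 1 = 0)), if_neg (by omega : ¬ (j + 1 + 1 = 0)),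
        Nat.add_sub_cancel]
      rw [Nat.choose_succ_succ, h1, h2]
      have h3' : m + 1 - (j + 1 + 1) = m - j - 1 := by omega
      rw [h3']
      push_cast
      ring
  have hsum := Finset.sum_congr rfl hterm
  rw [Finset.sum_sub_distrib, Finset.sum_range_sub'] at hsum
  have hvN : v N = ((m.choose (N - 1)) : ℝ) * p ^ N * (1 - p) ^ (m + 1 - N) := by
    simp only [hv, if_neg (by omega : ¬ N = 0)]
  have hv0 : v 0 = 0 := by simp [hv]
  rw [hvN, hv0] at hsum
  linarith

/-- The tail of the negative binomial distribution is a binomial cdf. -/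
lemma tailA (p : ℝ) {N h : ℕ} (hN : 1 ≤ N) (hNh : N ≤ h) :
    1 - ∑ k ∈ range h, nb p N k
      = ∑ i ∈ range N, ((h - 1).choose i : ℝ) * p ^ i * (1 - p) ^ (h - 1 - i) := by
  induction h, hNh using Nat.le_induction with
  | base =>
    have h0 : ∑ k ∈ range N, nb p N k = 0 := by
      apply Finset.sum_eq_zero
      intro k hk
      simp only [mem_range] at hk
      simp [nb, if_neg (by omega : ¬ N = 0), if_pos hk]
    rw [h0, sub_zero]
    have hb := add_pow p (1 - p) (N - 1)
    rw [show p + (1 - p) = 1 by ring, one_pow, show N - 1 + 1 = N by omega] at hb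
    exact hb.trans (Finset.sum_congr rfl fun i _ => by ring)
  | succ h hh ih =>
    rw [Finset.sum_range_succ]
    have hnb : nb p N h = ((h - 1).choose (N - 1) : ℝ) * (1 - p) ^ (h - N) * p ^ N := by
      simp [nb, if_neg (by omega : ¬ N = 0), if_neg (by omega : ¬ h < N)]
    have hk := keyB p hN hh
    simp only [Nat.add_sub_cancel]
    rw [hnb, hk, ← ih]
    ring

/-- Convolution formula for the pmf of a sum of two independent `ℕ`-valued variables. -/
lemma measure_add_eq {Ω : Type*} [MeasurableSpace Ω] (μ : Measure Ω) (X Y : Ω → ℕ)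
    (hX : Measurable X) (hY : Measurable Y) (hXY : IndepFun X Y μ) (k : ℕ) :
    μ {ω | X ω + Y ω = k}
      = ∑ a ∈ Finset.range (k + 1), μ {ω | X ω = a} * μ {ω | Y ω = k - a} := by
  have hset : {ω | X ω + Y ω = k}
      = ⋃ a ∈ Finset.range (k + 1), ({ω | X ω = a} ∩ {ω | Y ω = k - a}) := by
    ext ω
    simp only [Set.mem_setOf_eq, Set.mem_iUnion, Finset.mem_range, Set.mem_inter_iff,
      exists_prop]
    constructor
    · intro hk; exact ⟨X ω, by omega, rfl, by omega⟩
    · rintro ⟨a, ha, h1, h2⟩; omega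
  rw [hset, measure_biUnion_finset]
  · refine Finset.sum_congr rfl fun a _ => ?_
    have := hXY.measure_inter_preimage_eq_mul {a} {k - a}
      (measurableSet_singleton _) (measurableSet_singleton _)
    simpa [Set.preimage, Set.mem_singleton_iff] using this
  · intro a _ b _ hab
    simp only [Function.onFun]
    rw [Set.disjoint_left]
    rintro ω ⟨h1, _⟩ ⟨h2, _⟩
    exact hab (h1 ▸ h2 ▸ rfl)
  · intro a _
    exact (hX (measurableSet_singleton a)).inter (hY (measurableSet_singleton _))

/-- The pmf of a sum of i.i.d. geometric variables over a finset is negative binomial. -/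
lemma dist_sum {Ω : Type*} [MeasurableSpace Ω] (μ : Measure Ω) [IsProbabilityMeasure μ]
    {N : ℕ} {p : ℝ} (hp : p ∈ Set.Ioc (0 : ℝ) 1)
    (Θ : Fin N → Ω → ℕ) (hmeas : ∀ i, Measurable (Θ i))
    (hindep : iIndepFun Θ μ)
    (hg : ∀ i x, μ {ω | Θ i ω = x} = ENNReal.ofReal (g p x))
    (s : Finset (Fin N)) (k : ℕ) :
    μ {ω | ∑ i ∈ s, Θ i ω = k} = ENNReal.ofReal (nb p s.card k) := by
  classical
  induction s using Finset.induction_on generalizing k with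
  | empty =>
    simp only [Finset.sum_empty, Finset.card_empty]
    rcases Nat.eq_zero_or_pos k with hk | hk
    · subst hk
      have : {ω : Ω | (0 : ℕ) = 0} = Set.univ := by ext ω; simp
      rw [this, measure_univ]
      simp [nb]
    · have : {ω : Ω | (0 : ℕ) = k} = ∅ := by ext ω; simp; omega
      rw [this, measure_empty]
      simp [nb, if_neg (by omega : ¬ k = 0)]
  | @insert i s hi ih =>
    have hXmeas : Measurable (fun ω => ∑ j ∈ s, Θ j ω) := by
      apply Finset.measurable_sum
      exact fun j _ => hmeas j
    have hInd : IndepFun (∑ j ∈ s, Θ j) (Θ i) μ :=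
      hindep.indepFun_finsetSum_of_notMem hmeas hi
    have hev : {ω | ∑ j ∈ insert i s, Θ j ω = k}
        = {ω | (∑ j ∈ s, Θ j) ω + Θ i ω = k} := by
      ext ω
      simp only [Set.mem_setOf_eq, Finset.sum_insert hi, Finset.sum_apply]
      omega
    have hfun : (∑ j ∈ s, Θ j) = fun ω => ∑ j ∈ s, Θ j ω := by
      funext ω; simp [Finset.sum_apply]
    rw [hev, measure_add_eq μ _ _ (hfun ▸ hXmeas) (hmeas i) hInd k]
    have hterm : ∀ a ∈ Finset.range (k + 1),
        μ {ω | (∑ j ∈ s, Θ j) ω = a} * μ {ω | Θ i ω = k - a}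
          = ENNReal.ofReal (nb p s.card a * g p (k - a)) := by
      intro a _
      have h1 : {ω | (∑ j ∈ s, Θ j) ω = a} = {ω | ∑ j ∈ s, Θ j ω = a} := by
        ext ω; simp [Finset.sum_apply]
      rw [h1, ih, hg i, ← ENNReal.ofReal_mul (nb_nonneg hp _ _)]
    rw [Finset.sum_congr rfl hterm, ← ENNReal.ofReal_sum_of_nonneg
      (fun a _ => mul_nonneg (nb_nonneg hp _ _) (g_nonneg hp _)), conv]
    congr 1
    rw [Finset.card_insert_of_notMem hi]

end Stmt14Aux

/-- formula for `P(X = h)` in the symmetric-structure case. Let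
`Θ 1, …, Θ N` be i.i.d. geometric random variables with parameter `p ∈ (0,1]` and `h > N`.
Then `P(Σ_{i=1}^N Θ i ≥ h) = Σ_{i=0}^{N−1} C(h,i) (1−p)^{h−i} pⁱ
+ C(h−1, h−N) (1−p)^{h−N} p^N`. -/
theorem stmt14 {Ω : Type*} [MeasurableSpace Ω] (μ : Measure Ω) [IsProbabilityMeasure μ]
    (N h : ℕ) (hN : 1 ≤ N) (hh : N < h) (p : ℝ) (hp : p ∈ Set.Ioc (0 : ℝ) 1)
    (Θ : Fin N → Ω → ℕ) (hmeas : ∀ i, Measurable (Θ i))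
    (hindep : iIndepFun Θ μ)
    (hpos : ∀ i, ∀ᵐ ω ∂μ, 1 ≤ Θ i ω)
    (hgeom : ∀ i, ∀ x : ℕ, 1 ≤ x →
      μ {ω | Θ i ω = x} = ENNReal.ofReal ((1 - p) ^ (x - 1) * p)) :
    (μ {ω | h ≤ ∑ i, Θ i ω}).toReal
      = ∑ i ∈ Finset.range N, (h.choose i : ℝ) * (1 - p) ^ (h - i) * p ^ i
        + ((h - 1).choose (h - N) : ℝ) * (1 - p) ^ (h - N) * p ^ N := by
  classical
  open Stmt14Aux in
  -- full pmf of each `Θ i`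
  have hg : ∀ i x, μ {ω | Θ i ω = x} = ENNReal.ofReal (g p x) := by
    intro i x
    rcases Nat.eq_zero_or_pos x with hx | hx
    · subst hx
      have hnull : μ {ω | ¬ 1 ≤ Θ i ω} = 0 := by
        have := hpos i; rwa [MeasureTheory.ae_iff] at this
      have hset : {ω | Θ i ω = 0} = {ω | ¬ 1 ≤ Θ i ω} := by
        ext ω; simp only [Set.mem_setOf_eq]; omega
      rw [hset, hnull]
      simp [g]
    · rw [hgeom i x hx]
      simp [g, if_neg (by omega : ¬ x = 0)]
  -- pmf of the total sum
  have hdist : ∀ k, μ {ω | ∑ i, Θ i ω = k} = ENNReal.ofReal (nb p N k) := by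
    intro k
    have := dist_sum μ hp Θ hmeas hindep hg Finset.univ k
    rwa [Finset.card_univ, Fintype.card_fin] at this
  -- decompose the lower tail
  have hmeasS : Measurable (fun ω => ∑ i, Θ i ω) :=
    Finset.measurable_sum _ fun i _ => hmeas i
  have hlow : μ {ω | ∑ i, Θ i ω < h}
      = ENNReal.ofReal (∑ k ∈ Finset.range h, nb p N k) := by
    have hset : {ω | ∑ i, Θ i ω < h}
        = ⋃ k ∈ Finset.range h, {ω | ∑ i, Θ i ω = k} := by
      ext ω
      simp only [Set.mem_setOf_eq, Set.mem_iUnion, Finset.mem_range, exists_prop]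
      constructor
      · intro hk; exact ⟨_, hk, rfl⟩
      · rintro ⟨k, hk, h1⟩; omega
    rw [hset, measure_biUnion_finset]
    · rw [ENNReal.ofReal_sum_of_nonneg (fun k _ => nb_nonneg hp _ _)]
      exact Finset.sum_congr rfl fun k _ => hdist k
    · intro a _ b _ hab
      simp only [Function.onFun]
      rw [Set.disjoint_left]
      rintro ω h1 h2
      simp only [Set.mem_setOf_eq] at h1 h2
      exact hab (h1 ▸ h2 ▸ rfl)
    · intro k _
      exact hmeasS (measurableSet_singleton k)
  -- complement
  have hcompl : μ {ω | h ≤ ∑ i, Θ i ω} = 1 - μ {ω | ∑ i, Θ i ω < h} := by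
    have hset : {ω | h ≤ ∑ i, Θ i ω} = {ω | ∑ i, Θ i ω < h}ᶜ := by
      ext ω; simp only [Set.mem_setOf_eq, Set.mem_compl_iff]; omega
    have hms : MeasurableSet {ω | ∑ i, Θ i ω < h} := hmeasS measurableSet_Iio
    rw [hset, measure_compl hms (measure_ne_top μ _), measure_univ]
  have hsum_nonneg : (0 : ℝ) ≤ ∑ k ∈ Finset.range h, nb p N k :=
    Finset.sum_nonneg fun k _ => nb_nonneg hp _ _
  have hle1 : μ {ω | ∑ i, Θ i ω < h} ≤ 1 := prob_le_one
  have htoReal : (μ {ω | h ≤ ∑ i, Θ i ω}).toReal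
      = 1 - ∑ k ∈ Finset.range h, nb p N k := by
    rw [hcompl, ENNReal.toReal_sub_of_le hle1 ENNReal.one_ne_top, hlow,
      ENNReal.toReal_ofReal hsum_nonneg, ENNReal.toReal_one]
  rw [htoReal, tailA p hN hh.le]
  -- final combinatorial rearrangement
  have hchoose : (h - 1).choose (h - N) = (h - 1).choose (N - 1) := by
    have : h - N = (h - 1) - (N - 1) := by omega
    rw [this, Nat.choose_symm (by omega : N - 1 ≤ h - 1)]
  have hk := keyB p hN hh.le
  rw [hchoose]
  have hsum2 : ∑ i ∈ Finset.range N, (h.choose i : ℝ) * (1 - p) ^ (h - i) * p ^ i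
      = ∑ i ∈ Finset.range N, (h.choose i : ℝ) * p ^ i * (1 - p) ^ (h - i) :=
    Finset.sum_congr rfl fun i _ => by ring
  rw [hsum2, hk]
  ring
end

section
/- Let N ≥ 1 and h be integers with h > N, and p ∈ (0, 1] a real number. Let Θ₁, …, Θ_N be independent, identically distributed random variables, each taking values in the positive integers with P(Θᵢ = x) = (1−p)^{x−1}·p for every integer x ≥ 1, and set X = min(Σ_{i=1}^N Θᵢ, h). Then E[X] = N·p^N + Σ_{k=1}^{h−N−1} (N+k)·C(N+k−1, k)·(1−p)^k·p^N + h·( Σ_{i=0}^{N−1} C(h, i)·(1−p)^{h−i}·pⁱ + C(h−1, h−N)·(1−p)^{h−N}·p^N ), where C(n, k) denotes the binomial coefficient. -/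
open MeasureTheory ProbabilityTheory Finset

private lemma conv' (c K : ℕ) (q p : ℝ) :
    ∑ j ∈ range (K+1), (q ^ j * p) * (((c + (K - j)).choose (K - j) : ℝ) * q ^ (K - j) * p ^ (c+1))
      = ((c + K + 1).choose K : ℝ) * q ^ K * p ^ (c + 2) := by
  have hockey : ∑ j ∈ range (K+1), ((c + j).choose j : ℕ) = (c + K + 1).choose K := by
    have h2 : ∑ j ∈ range (K+1), (c + j).choose c = ∑ m ∈ Finset.Icc c (c + K), m.choose c := by
      induction K with
      | zero => simp
      | succ k ih =>
          rw [Finset.sum_range_succ, ih, show c + (k+1) = (c + k) + 1 from rfl,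
            Finset.sum_Icc_succ_top (by omega)]
    calc ∑ j ∈ range (K+1), ((c + j).choose j : ℕ)
        = ∑ j ∈ range (K+1), (c + j).choose c := by
          refine Finset.sum_congr rfl fun j _ => ?_
          rw [Nat.choose_symm_add]
      _ = ∑ m ∈ Finset.Icc c (c + K), m.choose c := h2
      _ = (c + K + 1).choose (c + 1) := Nat.sum_Icc_choose (c + K) c
      _ = (c + K + 1).choose K := by
          have h : c + 1 + K = c + K + 1 := by omega
          rw [← h, Nat.choose_symm_add]
  have step : ∀ j ∈ range (K+1), (q ^ j * p) * (((c + (K - j)).choose (K - j) : ℝ) * q ^ (K - j) * p ^ (c+1))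
      = ((c + (K - j)).choose (K - j) : ℝ) * (q ^ K * p ^ (c+2)) := by
    intro j hj
    rw [Finset.mem_range] at hj
    have e : q ^ j * q ^ (K - j) = q ^ K := by rw [← pow_add]; congr 1; omega
    calc (q ^ j * p) * (((c + (K - j)).choose (K - j) : ℝ) * q ^ (K - j) * p ^ (c+1))
        = ((c + (K - j)).choose (K - j) : ℝ) * ((q ^ j * q ^ (K - j)) * (p * p ^ (c+1))) := by ring
      _ = ((c + (K - j)).choose (K - j) : ℝ) * (q ^ K * p ^ (c+2)) := by
          rw [e, ← pow_succ']
  rw [Finset.sum_congr rfl step, ← Finset.sum_mul]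
  have h3 : ∑ j ∈ range (K+1), (((c + (K - j)).choose (K - j) : ℝ))
      = ((c + K + 1).choose K : ℝ) := by
    have h4 := Finset.sum_range_reflect (fun i => (((c + i).choose i : ℕ) : ℝ)) (K+1)
    simp only [Nat.add_sub_cancel] at h4
    rw [h4, ← Nat.cast_sum, hockey]
  rw [h3]; ring

private lemma law {Ω : Type*} [MeasurableSpace Ω] (μ : Measure Ω) [IsProbabilityMeasure μ]
    (N : ℕ) (p : ℝ) (hp : p ∈ Set.Ioc (0 : ℝ) 1)
    (Θ : Fin N → Ω → ℕ) (hmeas : ∀ i, Measurable (Θ i))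
    (hindep : iIndepFun Θ μ)
    (hpos : ∀ i, ∀ᵐ ω ∂μ, 1 ≤ Θ i ω)
    (hgeom : ∀ i, ∀ x : ℕ, 1 ≤ x →
      μ {ω | Θ i ω = x} = ENNReal.ofReal ((1 - p) ^ (x - 1) * p)) :
    ∀ s : Finset (Fin N), s.Nonempty → ∀ m : ℕ,
      μ {ω | ∑ i ∈ s, Θ i ω = m}
        = if s.card ≤ m then
            ENNReal.ofReal (((m-1).choose (m - s.card) : ℝ) * (1-p)^(m - s.card) * p^(s.card))
          else 0 := by
  classical
  obtain ⟨hp0, hp1⟩ := hp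
  have hq0 : (0:ℝ) ≤ 1 - p := by linarith
  have hAnull : ∀ a : Fin N, μ {ω | Θ a ω = 0} = 0 := by
    intro a
    have h0 := hpos a
    rw [MeasureTheory.ae_iff] at h0
    refine measure_mono_null ?_ h0
    intro ω hω
    simp only [Set.mem_setOf_eq] at *
    omega
  intro s hs
  induction hs using Finset.Nonempty.cons_induction with
  | singleton a =>
      intro m
      simp only [Finset.sum_singleton, Finset.card_singleton]
      rcases Nat.eq_zero_or_pos m with hm | hm
      · subst hm
        rw [if_neg (by omega)]
        exact hAnull a
      · rw [if_pos (show 1 ≤ m from hm), hgeom a m hm]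
        congr 1
        rw [show (m-1).choose (m-1) = 1 from Nat.choose_self _, pow_one]
        push_cast
        ring
  | cons a s ha hs ih =>
      intro m
      set c := s.card with hc
      have hc1 : 1 ≤ c := hs.card_pos
      set T : Ω → ℕ := fun ω => ∑ i ∈ s, Θ i ω with hT
      have hTmeas : Measurable T := Finset.measurable_sum _ (fun i _ => hmeas i)
      have hsum_cons : ∀ ω, ∑ i ∈ Finset.cons a s ha, Θ i ω = Θ a ω + T ω := by
        intro ω; rw [Finset.sum_cons]
      have hdecomp : {ω | ∑ i ∈ Finset.cons a s ha, Θ i ω = m}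
          = ⋃ x ∈ Finset.range (m+1), ({ω | Θ a ω = x} ∩ {ω | T ω = m - x}) := by
        ext ω
        simp only [Set.mem_setOf_eq, Set.mem_iUnion, Set.mem_inter_iff, Finset.mem_range,
          hsum_cons]
        constructor
        · intro hω
          exact ⟨Θ a ω, by omega, rfl, by omega⟩
        · rintro ⟨x, hx, h1, h2⟩
          omega
      have hmeasA : ∀ x : ℕ, MeasurableSet {ω | Θ a ω = x} := fun x =>
        (hmeas a) (measurableSet_singleton x)
      have hmeasB : ∀ y : ℕ, MeasurableSet {ω | T ω = y} := fun y =>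
        hTmeas (measurableSet_singleton y)
      have hμsum : μ {ω | ∑ i ∈ Finset.cons a s ha, Θ i ω = m}
          = ∑ x ∈ Finset.range (m+1), μ ({ω | Θ a ω = x} ∩ {ω | T ω = m - x}) := by
        rw [hdecomp]
        refine measure_biUnion_finset ?_ (fun x _ => (hmeasA x).inter (hmeasB (m - x)))
        intro x _ y _ hxy
        refine Set.disjoint_left.2 ?_
        rintro ω ⟨h1, _⟩ ⟨h2, _⟩
        exact hxy (h1.symm.trans h2)
      have hindepTA : IndepFun T (Θ a) μ := by
        have h := hindep.indepFun_finset_sum_of_notMem hmeas ha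
        have e : (∑ j ∈ s, Θ j) = T := by
          funext ω; exact Finset.sum_apply ω s Θ
        rwa [e] at h
      have hprod : ∀ x : ℕ, μ ({ω | Θ a ω = x} ∩ {ω | T ω = m - x})
          = μ {ω | Θ a ω = x} * μ {ω | T ω = m - x} := by
        intro x
        have h := hindepTA.measure_inter_preimage_eq_mul {m - x} {x}
          (measurableSet_singleton _) (measurableSet_singleton _)
        have e1 : T ⁻¹' {m - x} = {ω | T ω = m - x} := rfl
        have e2 : Θ a ⁻¹' {x} = {ω | Θ a ω = x} := rfl
        rw [e1, e2] at h
        rw [Set.inter_comm] at h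
        rw [h, mul_comm]
      rw [hμsum, Finset.sum_congr rfl (fun x _ => hprod x)]
      rw [Finset.card_cons, ← hc]
      by_cases hcm : c + 1 ≤ m
      · -- main case
        rw [if_pos hcm]
        set K := m - c - 1 with hK
        have hmK : m = c + K + 1 := by omega
        have hgzero : ∀ x ∈ Finset.range (m+1), x ∉ Finset.range (K+1+1) →
            μ {ω | Θ a ω = x} * μ {ω | T ω = m - x} = 0 := by
          intro x _ hx
          rw [Finset.mem_range, not_lt] at hx
          have : ¬ c ≤ m - x := by omega
          rw [ih (m - x), if_neg this, mul_zero]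
        rw [← Finset.sum_subset (Finset.range_subset_range.2 (by omega)) hgzero]
        rw [Finset.sum_range_succ']
        rw [hAnull a, zero_mul, add_zero]
        have hterm : ∀ j ∈ Finset.range (K+1),
            μ {ω | Θ a ω = j + 1} * μ {ω | T ω = m - (j+1)}
              = ENNReal.ofReal (((1-p) ^ j * p) *
                  ((((c-1) + (K - j)).choose (K - j) : ℝ) * (1-p) ^ (K - j) * p ^ ((c-1)+1))) := by
          intro j hj
          rw [Finset.mem_range] at hj
          rw [hgeom a (j+1) (by omega), ih (m - (j+1)), if_pos (by omega)]
          rw [← ENNReal.ofReal_mul (by positivity)]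
          congr 1
          have e1 : j + 1 - 1 = j := by omega
          have e2 : m - (j+1) - 1 = (c-1) + (K - j) := by omega
          have e3 : m - (j+1) - c = K - j := by omega
          have e4 : (c-1) + 1 = c := by omega
          rw [e1, e2, e3, e4]
        rw [Finset.sum_congr rfl hterm, ← ENNReal.ofReal_sum_of_nonneg (by
          intro j hj
          have : (0:ℝ) ≤ (((c-1) + (K - j)).choose (K - j) : ℝ) := Nat.cast_nonneg _
          positivity)]
        rw [conv' (c-1) K (1-p) p]
        congr 1
        have e5 : (c-1) + K + 1 = c + K := by omega
        have e6 : m - 1 = c + K := by omega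
        have e7 : m - (c+1) = K := by omega
        have e8 : (c-1) + 2 = c + 1 := by omega
        rw [e5, e6, e7, e8]
      · rw [if_neg hcm]
        refine Finset.sum_eq_zero ?_
        intro x _
        rcases Nat.eq_zero_or_pos x with hx | hx
        · subst hx; rw [hAnull a, zero_mul]
        · rw [ih (m - x), if_neg (by omega), mul_zero]

private lemma telesc (h : ℕ) (p : ℝ) :
    ∀ N : ℕ, 1 ≤ N → N ≤ h →
    ∑ i ∈ range N, ((h+1).choose i : ℝ) * (1-p)^(h+1-i) * p^i
      = ∑ i ∈ range N, (h.choose i : ℝ) * (1-p)^(h-i) * p^i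
        - (h.choose (N-1) : ℝ) * (1-p)^(h+1-N) * p^N := by
  intro N h1N
  induction N, h1N using Nat.le_induction with
  | base =>
      intro h1
      simp only [Finset.sum_range_one, Nat.choose_zero_right, Nat.cast_one, pow_zero, one_mul,
        mul_one, Nat.sub_zero, Nat.sub_self, pow_one]
      have e2 : h + 1 - 1 = h := by omega
      rw [e2, pow_succ]; ring
  | succ n hn ih =>
      intro hnh
      have hn' : n ≤ h := by omega
      rw [Finset.sum_range_succ, Finset.sum_range_succ, ih hn']
      have pascal : ((h+1).choose n : ℝ) = (h.choose (n-1) : ℝ) + (h.choose n : ℝ) := by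
        have e : (h+1).choose n = h.choose (n-1) + h.choose n := by
          obtain ⟨m, rfl⟩ : ∃ m, n = m + 1 := ⟨n - 1, by omega⟩
          simpa using Nat.choose_succ_succ h m
        rw [e]; push_cast; ring
      have e1 : (1-p)^(h+1-n) = (1-p)^(h-n) * (1-p) := by
        rw [← pow_succ]; congr 1; omega
      have e2 : n + 1 - 1 = n := by omega
      have e3 : h + 1 - (n+1) = h - n := by omega
      rw [pascal, e1, e2, e3]
      ring

private lemma keyid (N : ℕ) (hN : 1 ≤ N) (p : ℝ) :
    ∀ h : ℕ, N + 1 ≤ h →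
    1 - ∑ k ∈ range (h - N), ((N + k - 1).choose k : ℝ) * (1-p)^k * p^N
      = ∑ i ∈ range N, (h.choose i : ℝ) * (1-p)^(h-i) * p^i
        + ((h-1).choose (h-N) : ℝ) * (1-p)^(h-N) * p^N := by
  intro h hh1
  induction h, hh1 using Nat.le_induction with
  | base =>
      have e0 : N + 1 - N = 1 := by omega
      rw [e0]
      simp only [Finset.sum_range_one, Nat.add_zero, Nat.choose_zero_right, Nat.cast_one,
        pow_zero, one_mul]
      have hbin : (1:ℝ)
          = ∑ m ∈ range (N+2), p^m * (1-p)^(N+1-m) * ((N+1).choose m : ℝ) := by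
        have := add_pow p (1-p) (N+1)
        rw [show p + (1-p) = 1 by ring, one_pow] at this
        exact this
      rw [Finset.sum_range_succ, Finset.sum_range_succ] at hbin
      have c1 : ((N+1).choose N : ℝ) = (N:ℝ) + 1 := by
        rw [Nat.choose_succ_self_right]; push_cast; ring
      have c2 : ((N+1).choose (N+1) : ℝ) = 1 := by
        rw [Nat.choose_self]; norm_num
      have c3 : ((N+1-1).choose 1 : ℝ) = (N : ℝ) := by
        have e : N + 1 - 1 = N := by omega
        rw [e, Nat.choose_one_right]
      rw [e0, c1, c2] at hbin
      simp only [Nat.sub_self, pow_zero, pow_one, mul_one] at hbin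
      have hsum : ∑ i ∈ range N, ((N+1).choose i : ℝ) * (1-p)^(N+1-i) * p^i
          = ∑ m ∈ range N, p^m * (1-p)^(N+1-m) * ((N+1).choose m : ℝ) := by
        refine Finset.sum_congr rfl fun i _ => by ring
      rw [c3, hsum]
      linear_combination hbin
  | succ h hh ih =>
      have hNh : N ≤ h := by omega
      have eK : h + 1 - N = (h - N) + 1 := by omega
      rw [eK, Finset.sum_range_succ]
      have eNk : N + (h - N) - 1 = h - 1 := by omega
      rw [eNk]
      rw [telesc h p N hN hNh]
      have csym : (((h+1-1).choose (h - N + 1)) : ℝ) = (h.choose (N-1) : ℝ) := by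
        congr 1
        have h1 : h + 1 - 1 = h := by omega
        rw [h1, ← Nat.choose_symm (show h - N + 1 ≤ h by omega)]
        congr 1
        omega
      rw [csym, eK]
      linear_combination ih

/-- expected number of active slots in the symmetric-structure case,
right-hand side of the stability condition (30) for `h > N`. Let `Θ 1, …, Θ N` be i.i.d.
geometric with parameter `p ∈ (0,1]`, `h > N`, and `X = min(Σ_{i=1}^N Θ i, h)`. Then
`E[X] = N p^N + Σ_{k=1}^{h−N−1} (N+k) C(N+k−1, k) (1−p)^k p^N
+ h (Σ_{i=0}^{N−1} C(h,i) (1−p)^{h−i} pⁱ + C(h−1, h−N) (1−p)^{h−N} p^N)`. -/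
theorem stmt15 {Ω : Type*} [MeasurableSpace Ω] (μ : Measure Ω) [IsProbabilityMeasure μ]
    (N h : ℕ) (hN : 1 ≤ N) (hh : N < h) (p : ℝ) (hp : p ∈ Set.Ioc (0 : ℝ) 1)
    (Θ : Fin N → Ω → ℕ) (hmeas : ∀ i, Measurable (Θ i))
    (hindep : iIndepFun Θ μ)
    (hpos : ∀ i, ∀ᵐ ω ∂μ, 1 ≤ Θ i ω)
    (hgeom : ∀ i, ∀ x : ℕ, 1 ≤ x →
      μ {ω | Θ i ω = x} = ENNReal.ofReal ((1 - p) ^ (x - 1) * p)) :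
    ∫ ω, (min (∑ i, Θ i ω) h : ℝ) ∂μ
      = (N : ℝ) * p ^ N
        + ∑ k ∈ Finset.Icc 1 (h - N - 1),
            ((N : ℝ) + k) * ((N + k - 1).choose k : ℝ) * (1 - p) ^ k * p ^ N
        + (h : ℝ) * (∑ i ∈ Finset.range N, (h.choose i : ℝ) * (1 - p) ^ (h - i) * p ^ i
            + ((h - 1).choose (h - N) : ℝ) * (1 - p) ^ (h - N) * p ^ N) := by
  classical
  obtain ⟨hp0, hp1⟩ := hp
  have hq0 : (0:ℝ) ≤ 1 - p := by linarith
  set S : Ω → ℕ := fun ω => ∑ i, Θ i ω with hS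
  have hSmeas : Measurable S := Finset.measurable_sum _ (fun i _ => hmeas i)
  set g : Ω → ℕ := fun ω => min (S ω) h with hg
  have hgmeas : Measurable g := (measurable_from_top (f := fun n => min n h)).comp hSmeas
  have hNE : Nonempty (Fin N) := ⟨⟨0, by omega⟩⟩
  have hlaw : ∀ m : ℕ, μ {ω | S ω = m}
      = if N ≤ m then
          ENNReal.ofReal (((m-1).choose (m - N) : ℝ) * (1-p)^(m - N) * p^N)
        else 0 := by
    intro m
    have := law μ N p ⟨hp0, hp1⟩ Θ hmeas hindep hpos hgeom Finset.univ Finset.univ_nonempty m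
    rwa [Finset.card_univ, Fintype.card_fin] at this
  have hr0 : ∀ k : ℕ, (0:ℝ) ≤ ((N + k - 1).choose k : ℝ) * (1-p)^k * p^N := by
    intro k
    have : (0:ℝ) ≤ ((N + k - 1).choose k : ℝ) := Nat.cast_nonneg _
    positivity
  have hmeasA : ∀ m : ℕ, MeasurableSet {ω | g ω = m} :=
    fun m => hgmeas (measurableSet_singleton m)
  have hEq : ∫ ω, (min (∑ i, Θ i ω) h : ℝ) ∂μ = ∫ ω, ((g ω : ℕ) : ℝ) ∂μ := by
    refine integral_congr_ae (Filter.EventuallyEq.of_eq (funext fun ω => ?_))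
    have e : g ω = min (S ω) h := rfl
    rw [e, Nat.cast_min, hS]
    push_cast
    rfl
  have hfun : (fun ω => ((g ω : ℕ) : ℝ))
      = fun ω => ∑ m ∈ range (h+1), Set.indicator {ω' | g ω' = m} (fun _ => (m:ℝ)) ω := by
    funext ω
    have hsum : ∑ m ∈ range (h+1), Set.indicator {ω' | g ω' = m} (fun _ => (m:ℝ)) ω
        = ∑ m ∈ range (h+1), if g ω = m then (m:ℝ) else 0 := by
      refine Finset.sum_congr rfl fun m _ => ?_
      simp [Set.indicator_apply, Set.mem_setOf_eq]
    rw [hsum, Finset.sum_ite_eq, if_pos (Finset.mem_range.2 (by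
      have : g ω ≤ h := min_le_right _ _
      omega))]
  have hint : ∫ ω, ((g ω : ℕ) : ℝ) ∂μ
      = ∑ m ∈ range (h+1), (μ {ω | g ω = m}).toReal * m := by
    rw [hfun, MeasureTheory.integral_finset_sum (range (h+1))
      (f := fun (m : ℕ) (ω : Ω) => Set.indicator {ω' | g ω' = m} (fun _ => (m:ℝ)) ω)
      (fun m _ => (integrable_const (m:ℝ)).indicator (hmeasA m))]
    refine Finset.sum_congr rfl fun m _ => ?_
    rw [MeasureTheory.integral_indicator_const _ (hmeasA m), smul_eq_mul, measureReal_def]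
  have hfiber : ∀ m : ℕ, m < h → {ω | g ω = m} = {ω | S ω = m} := by
    intro m hm
    ext ω
    simp only [Set.mem_setOf_eq, hg]
    omega
  have hSlt : μ {ω | S ω < h} = ∑ m ∈ range h, μ {ω | S ω = m} := by
    have hdec : {ω | S ω < h} = ⋃ m ∈ range h, {ω | S ω = m} := by
      ext ω
      simp only [Set.mem_setOf_eq, Set.mem_iUnion, Finset.mem_range]
      exact ⟨fun hω => ⟨S ω, hω, rfl⟩, fun ⟨m, hm, he⟩ => he ▸ hm⟩
    rw [hdec]
    refine measure_biUnion_finset ?_ (fun m _ => hSmeas (measurableSet_singleton m))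
    intro x _ y _ hxy
    refine Set.disjoint_left.2 ?_
    rintro ω h1 h2
    simp only [Set.mem_setOf_eq] at h1 h2
    exact hxy (h1.symm.trans h2)
  set R : ℝ := ∑ k ∈ range (h - N), ((N + k - 1).choose k : ℝ) * (1-p)^k * p^N with hR
  have hsum_lt : ∑ m ∈ range h, μ {ω | S ω = m} = ENNReal.ofReal R := by
    have h1 : ∑ m ∈ range h, μ {ω | S ω = m} = ∑ m ∈ Finset.Ico N h, μ {ω | S ω = m} := by
      rw [Finset.range_eq_Ico]
      refine (Finset.sum_subset (Finset.Ico_subset_Ico (by omega) le_rfl) ?_).symm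
      intro m hm1 hm2
      simp only [Finset.mem_Ico] at hm1 hm2
      rw [hlaw m, if_neg (by omega)]
    rw [h1, Finset.sum_Ico_eq_sum_range]
    have h2 : ∀ k ∈ range (h - N), μ {ω | S ω = N + k}
        = ENNReal.ofReal (((N + k - 1).choose k : ℝ) * (1-p)^k * p^N) := by
      intro k _
      rw [hlaw (N + k), if_pos (by omega), show N + k - N = k from by omega]
    rw [Finset.sum_congr rfl h2, hR, ENNReal.ofReal_sum_of_nonneg (fun k _ => hr0 k)]
  have hRle : ENNReal.ofReal R ≤ 1 := by
    rw [← hsum_lt, ← hSlt]; exact prob_le_one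
  have hR0 : 0 ≤ R := Finset.sum_nonneg fun k _ => hr0 k
  have htail : (μ {ω | g ω = h}).toReal = 1 - R := by
    have hset : {ω | g ω = h} = {ω | S ω < h}ᶜ := by
      ext ω
      simp only [Set.mem_setOf_eq, Set.mem_compl_iff, hg]
      omega
    rw [hset, prob_compl_eq_one_sub (measurableSet_lt hSmeas measurable_const),
      hSlt, hsum_lt, ENNReal.toReal_sub_of_le hRle (by norm_num), ENNReal.toReal_one,
      ENNReal.toReal_ofReal hR0]
  -- the body sum
  have hbody : ∑ m ∈ range h, (μ {ω | g ω = m}).toReal * m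
      = ∑ k ∈ range (h - N), (((N + k - 1).choose k : ℝ) * (1-p)^k * p^N) * (N + k : ℕ) := by
    have h1 : ∀ m ∈ range h, (μ {ω | g ω = m}).toReal * m
        = (μ {ω | S ω = m}).toReal * m := by
      intro m hm
      rw [hfiber m (Finset.mem_range.1 hm)]
    rw [Finset.sum_congr rfl h1]
    have h2 : ∑ m ∈ range h, (μ {ω | S ω = m}).toReal * m
        = ∑ m ∈ Finset.Ico N h, (μ {ω | S ω = m}).toReal * m := by
      rw [Finset.range_eq_Ico]
      refine (Finset.sum_subset (Finset.Ico_subset_Ico (by omega) le_rfl) ?_).symm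
      intro m hm1 hm2
      simp only [Finset.mem_Ico] at hm1 hm2
      rw [hlaw m, if_neg (by omega)]
      simp
    rw [h2, Finset.sum_Ico_eq_sum_range]
    refine Finset.sum_congr rfl fun k _ => ?_
    rw [hlaw (N + k), if_pos (by omega), show N + k - N = k from by omega,
      ENNReal.toReal_ofReal (hr0 k)]
  have hkey := keyid N hN p h (by omega)
  rw [hEq]
  calc ∫ ω, ((g ω : ℕ) : ℝ) ∂μ
      = ∑ m ∈ range (h+1), (μ {ω | g ω = m}).toReal * m := hint
    _ = ∑ m ∈ range h, (μ {ω | g ω = m}).toReal * m + (μ {ω | g ω = h}).toReal * h :=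
        Finset.sum_range_succ _ h
    _ = ∑ k ∈ range (h - N), (((N + k - 1).choose k : ℝ) * (1-p)^k * p^N) * (N + k : ℕ)
          + (1 - R) * h := by rw [hbody, htail]
    _ = (N : ℝ) * p ^ N
        + ∑ k ∈ Finset.Icc 1 (h - N - 1),
            ((N : ℝ) + k) * ((N + k - 1).choose k : ℝ) * (1 - p) ^ k * p ^ N
        + (h : ℝ) * (∑ i ∈ Finset.range N, (h.choose i : ℝ) * (1 - p) ^ (h - i) * p ^ i
            + ((h - 1).choose (h - N) : ℝ) * (1 - p) ^ (h - N) * p ^ N) := by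
        rw [← hkey]
        have hsplit : ∑ k ∈ range (h - N), (((N + k - 1).choose k : ℝ) * (1-p)^k * p^N) * (N + k : ℕ)
            = (N : ℝ) * p ^ N
              + ∑ k ∈ Finset.Icc 1 (h - N - 1),
                  ((N : ℝ) + k) * ((N + k - 1).choose k : ℝ) * (1 - p) ^ k * p ^ N := by
          rw [Finset.range_eq_Ico, Finset.sum_eq_sum_Ico_succ_bot (show 0 < h - N by omega)]
          congr 1
          · simp only [Nat.add_zero, Nat.choose_zero_right, Nat.cast_one, pow_zero]
            ring
          · rw [show h - N = (h - N - 1) + 1 by omega, Finset.Ico_add_one_right_eq_Icc]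
            refine Finset.sum_congr rfl fun k _ => ?_
            push_cast
            ring
        rw [hsplit]
        ring
end
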